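/- Let A be an n×n complex matrix, let U be a unitary n×n complex matrix and R an upper triangular n×n complex matrix such that A·U = U·R (a Schur factorization of A), and let v₁ denote the first column of U, so that v₁ is a unit eigenvector of A with eigenvalue λ₁ = R₁₁. Then for every complex scalar σ, the characteristic polynomial of A₁ := A − σ·v₁·v₁* equals (X − (R₁₁ − σ)) · ∏_{i=2}^{n} (X − Rᵢᵢ); in particular, the eigenvalues of A₁ (with multiplicity) are λ₁ − σ together with the eigenvalues R₂₂, …, Rₙₙ of A other than λ₁. -/
import Mathlib


open Polynomial

/-- Similarity invariance of the characteristic polynomial. -/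
lemma charpoly_conj_aux {n : ℕ} (U M V : Matrix (Fin n) (Fin n) ℂ)
    (h₁ : V * U = 1) (h₂ : U * V = 1) :
    (U * M * V).charpoly = M.charpoly := by
  have hmap : ∀ (P Q : Matrix (Fin n) (Fin n) ℂ),
      ((P * Q).map (C : ℂ →+* ℂ[X])) = P.map C * Q.map C := fun P Q => by
    simpa using (RingHom.mapMatrix
     (C : ℂ →+* ℂ[X])).map_mul P Q
  have key : Matrix.charmatrix (U * M * V) = U.map C * Matrix.charmatrix M * V.map C := by
    rw [Matrix.charmatrix, Matrix.charmatrix]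
    have h1 : (Matrix.scalar (Fin n) (X : ℂ[X])) = (X : ℂ[X]) • 1 := by
      ext i j; by_cases h : i = j <;> simp [Matrix.scalar_apply, Matrix.diagonal, h]
    have hscalar : (Matrix.scalar (Fin n) (X : ℂ[X]))
        = U.map C * Matrix.scalar (Fin n) (X : ℂ[X]) * V.map C := by
      rw [h1, Matrix.mul_smul, Matrix.smul_mul, mul_one, ← hmap, h₂]
      simp
    rw [Matrix.mul_sub, Matrix.sub_mul, ← hscalar]
    simp [RingHom.mapMatrix_apply, hmap]
  rw [Matrix.charpoly, Matrix.charpoly, key, Matrix.det_mul, Matrix.det_mul]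
  have hdet : (U.map (C : ℂ →+* ℂ[X])).det * (V.map C).det = 1 := by
    rw [← Matrix.det_mul, ← hmap, h₂]; simp
  rw [mul_comm ((U.map (C : ℂ →+* ℂ[X])).det), mul_assoc, hdet, mul_one]

/-- **Deflation with one Schur vector (spectral statement).** -/
theorem stmt_1 {n : ℕ} (hn : 0 < n) (A U R : Matrix (Fin n) (Fin n) ℂ)
    (hU₁ : U.conjTranspose * U = 1) (hU₂ : U * U.conjTranspose = 1)
    (hR : ∀ i j : Fin n, j < i → R i j = 0)
    (hAUR : A * U = U * R) (σ : ℂ) :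
    (A - σ • Matrix.vecMulVec (fun i => U i ⟨0, hn⟩)
        (star fun i => U i ⟨0, hn⟩)).charpoly =
      (X - C (R ⟨0, hn⟩ ⟨0, hn⟩ - σ)) *
        ∏ i ∈ Finset.univ.erase (⟨0, hn⟩ : Fin n), (X - C (R i i)) := by
  set i0 : Fin n := ⟨0, hn⟩
  set E : Matrix (Fin n) (Fin n) ℂ := Matrix.single i0 i0 1 with hE
  -- v v* = U E Uᴴ
  have hvv : Matrix.vecMulVec (fun i => U i i0) (star fun i => U i i0)
      = U * E * U.conjTranspose := by
    ext i j
    simp only [Matrix.vecMulVec_apply, Matrix.mul_apply, Matrix.conjTranspose_apply, hE,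
      Matrix.single, Matrix.of_apply, Pi.star_apply]
    simp [Finset.sum_ite_eq, ite_and, mul_comm]
  have hA : A = U * R * U.conjTranspose := by
    calc A = A * (U * U.conjTranspose) := by rw [hU₂, mul_one]
    _ = (A * U) * U.conjTranspose := by rw [mul_assoc]
    _ = U * R * U.conjTranspose := by rw [hAUR]
  have hA1 : A - σ • Matrix.vecMulVec (fun i => U i i0) (star fun i => U i i0)
      = U * (R - σ • E) * U.conjTranspose := by
    rw [hvv, hA, Matrix.mul_sub, Matrix.sub_mul]
    congr 1
    rw [Matrix.mul_smul, Matrix.smul_mul]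
  rw [hA1, charpoly_conj_aux U (R - σ • E) U.conjTranspose hU₁ hU₂]
  have htri : (R - σ • E).BlockTriangular id := by
    intro i j hij
    have hne : ¬ (i = i0 ∧ j = i0) := by
      rintro ⟨hi, hj⟩; exact absurd (hi ▸ hj ▸ hij) (lt_irrefl _)
    have hEij : E i j = 0 := by
      exact Matrix.single_apply_of_ne _ _ _ _ _
        (fun h => hne ⟨h.1.symm, h.2.symm⟩)
    simp [hR i j hij, hEij]
  rw [Matrix.charpoly_of_upperTriangular _ htri,
    ← Finset.mul_prod_erase Finset.univ _ (Finset.mem_univ i0)]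
  congr 1
  · simp [hE, sub_sub]
  · apply Finset.prod_congr rfl
    intro i hi
    have hi' : i ≠ i0 := (Finset.mem_erase.mp hi).1
    simp [hE, Matrix.single_apply_of_ne _ _ _ _ _ (fun h => hi' h.1.symm)]
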